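/- Let f be a Boolean network of dimension n and x, y ∈ 𝔹^n with x →*_{mp,f} y (y reachable from x under the most permissive semantics). Then there exists a sequence of at most 3n most permissive transitions from x to y, consisting first of at most n transitions from Boolean states to dynamic states, then at most n transitions between dynamic states, then at most n transitions from dynamic states to Boolean states. -/
import Mathlib


inductive PState : Type
  | zero | up | down | one
deriving DecidableEq

def PState.ofBool : Bool → PState
  | false => .zero
  | true  => .one

def PState.isBool (p : PState) : Prop := p = .zero ∨ p = .one

abbrev BN (n : ℕ) := (Fin n → Bool) → Fin n → Bool

def gamma {n : ℕ} (x : Fin n → PState) : Set (Fin n → Bool) :=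
  {b | ∀ i (v : Bool), x i = PState.ofBool v → b i = v}

def mpStep {n : ℕ} (f : BN n) (x y : Fin n → PState) : Prop :=
  ∃ i : Fin n, x i ≠ y i ∧ (∀ j, j ≠ i → x j = y j) ∧
    ((y i = .up ∧ x i ≠ .one ∧ ∃ z ∈ gamma x, f z i = true) ∨
     (y i = .one ∧ x i = .up) ∨
     (y i = .down ∧ x i ≠ .zero ∧ ∃ z ∈ gamma x, f z i = false) ∨
     (y i = .zero ∧ x i = .down))

def mpReachP {n : ℕ} (f : BN n) : (Fin n → PState) → (Fin n → PState) → Prop :=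
  Relation.ReflTransGen (mpStep f)

def embed {n : ℕ} (x : Fin n → Bool) : Fin n → PState := fun i => PState.ofBool (x i)

def mpReach {n : ℕ} (f : BN n) (x : Fin n → Bool) : Set (Fin n → Bool) :=
  {y | mpReachP f (embed x) (embed y)}

def cubeSet {n : ℕ} (h : Fin n → Option Bool) : Set (Fin n → Bool) :=
  {z | ∀ i b, h i = some b → z i = b}

def smaller {n : ℕ} (h h' : Fin n → Option Bool) : Prop :=
  ∀ i b, h' i = some b → h i = some b

def kClosed {n : ℕ} (f : BN n) (K : Finset (Fin n)) (h : Fin n → Option Bool) : Prop :=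
  ∀ z ∈ cubeSet h, ∀ i ∈ K, h i = none ∨ h i = some (f z i)

def closedBy {n : ℕ} (f : BN n) (h : Fin n → Option Bool) : Prop :=
  ∀ z ∈ cubeSet h, f z ∈ cubeSet h

def smallestClosed {n : ℕ} (f : BN n) (x : Fin n → Bool) (h : Fin n → Option Bool) : Prop :=
  x ∈ cubeSet h ∧ closedBy f h ∧
    ∀ h', x ∈ cubeSet h' → closedBy f h' → smaller h h'

def minClosed {n : ℕ} (f : BN n) (h : Fin n → Option Bool) : Prop :=
  closedBy f h ∧ ∀ h', closedBy f h' → smaller h' h → h' = h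

def faStep {n : ℕ} (f : BN n) (x y : Fin n → Bool) : Prop :=
  ∃ i : Fin n, x i ≠ y i ∧ (∀ j, j ≠ i → x j = y j) ∧ y i = f x i

def aStep {n : ℕ} (f : BN n) (x y : Fin n → Bool) : Prop :=
  x ≠ y ∧ ∀ i, x i ≠ y i → y i = f x i

def mnStep {n m : ℕ} (F : (Fin n → Fin (m+1)) → Fin n → ℤ)
    (x y : Fin n → Fin (m+1)) : Prop :=
  x ≠ y ∧ ∀ i, x i ≠ y i → ((y i : ℤ) = (x i : ℤ) + F x i)

def beta {n m : ℕ} (x : Fin n → Fin (m+1)) : Set (Fin n → Bool) :=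
  {b | ∀ i, ((x i : ℕ) = 0 → b i = false) ∧ ((x i : ℕ) = m → b i = true)}

def refines {n m : ℕ} (F : (Fin n → Fin (m+1)) → Fin n → ℤ) (f : BN n) : Prop :=
  ∀ x i, (F x i > 0 → ∃ b ∈ beta x, f b i = true) ∧
         (F x i < 0 → ∃ b ∈ beta x, f b i = false)

def alpha {n m : ℕ} (x : Fin n → Fin (m+1)) : Set (Fin n → PState) :=
  {p | ∀ i, ((x i : ℕ) = 0 ↔ p i = .zero) ∧ ((x i : ℕ) = m ↔ p i = .one)}

def bdStep {n : ℕ} (f : BN n) (L : Finset (Fin n)) (a b : Fin n → PState) : Prop :=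
  mpStep f a b ∧ ∃ j, a j ≠ b j ∧ j ∉ L ∧ (a j).isBool ∧ ¬ (b j).isBool

def exhaustive {n : ℕ} (f : BN n) (x : Fin n → Bool) (L : Finset (Fin n))
    (zhat : Fin n → PState) : Prop :=
  Relation.ReflTransGen (bdStep f L) (embed x) zhat ∧ ∀ z', ¬ bdStep f L zhat z'

section Stmt8Aux

lemma PState.dyn_iff (p : PState) : (p = .up ∨ p = .down) ↔ ¬ p.isBool := by
  cases p <;> simp [PState.isBool]

lemma PState.ofBool_isBool (v : Bool) : (PState.ofBool v).isBool := by
  cases v <;> simp [PState.ofBool, PState.isBool]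

lemma PState.ofBool_not_dyn (v : Bool) : ¬ (PState.ofBool v = .up ∨ PState.ofBool v = .down) := by
  cases v <;> simp [PState.ofBool]

lemma PState.dyn_ne_ofBool {p : PState} (h : p = .up ∨ p = .down) (v : Bool) :
    p ≠ PState.ofBool v := by
  cases v <;> rcases h with h | h <;> subst h <;> simp [PState.ofBool]

lemma PState.dyn_ne_one {p : PState} (h : p = .up ∨ p = .down) : p ≠ .one := by
  rcases h with h | h <;> subst h <;> simp

lemma PState.dyn_ne_zero {p : PState} (h : p = .up ∨ p = .down) : p ≠ .zero := by
  rcases h with h | h <;> subst h <;> simp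

lemma PState.ofBool_inj {v w : Bool} (h : PState.ofBool v = PState.ofBool w) : v = w := by
  cases v <;> cases w <;> simp_all [PState.ofBool]

lemma gammaMono {n : ℕ} {a b : Fin n → PState}
    (h : ∀ j (v : Bool), b j = PState.ofBool v → a j = PState.ofBool v) :
    gamma a ⊆ gamma b := fun z hz j v hv => hz j v (h j v hv)

lemma mpStep_at {n : ℕ} {f : BN n} {a b : Fin n → PState} (h : mpStep f a b)
    {j : Fin n} (hj : a j ≠ b j) :
    (∀ k, k ≠ j → a k = b k) ∧
    ((b j = .up ∧ a j ≠ .one ∧ ∃ z ∈ gamma a, f z j = true) ∨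
     (b j = .one ∧ a j = .up) ∨
     (b j = .down ∧ a j ≠ .zero ∧ ∃ z ∈ gamma a, f z j = false) ∨
     (b j = .zero ∧ a j = .down)) := by
  obtain ⟨i, hne, heq, hc⟩ := h
  have hji : j = i := by
    by_contra hji
    exact hj (heq j hji)
  subst hji
  exact ⟨heq, hc⟩

lemma mpStep_fix {n : ℕ} {f : BN n} {a b : Fin n → PState} (h : mpStep f a b)
    {j : Fin n} (ha : ¬ (a j = .up ∨ a j = .down)) (hb : ¬ (b j = .up ∨ b j = .down)) :
    a j = b j := by
  by_contra hne
  rcases (mpStep_at h hne).2 with ⟨h1, _⟩ | ⟨h1, h2⟩ | ⟨h1, _⟩ | ⟨h1, h2⟩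
  · exact hb (Or.inl h1)
  · exact ha (Or.inl h2)
  · exact hb (Or.inr h1)
  · exact ha (Or.inr h2)

lemma pathOf {α : Type*} {r : α → α → Prop} {a b : α} (h : Relation.ReflTransGen r a b) :
    ∃ (m : ℕ) (π : ℕ → α), π 0 = a ∧ (∀ t, m ≤ t → π t = b) ∧ ∀ t < m, r (π t) (π (t+1)) := by
  induction h with
  | refl => exact ⟨0, fun _ => a, rfl, fun t _ => rfl, fun t ht => absurd ht (by omega)⟩
  | @tail b' c' hab hbc ih =>
    obtain ⟨m, π, h0, hb, hs⟩ := ih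
    refine ⟨m+1, fun t => if t ≤ m then π t else c', by simp [h0], ?_, ?_⟩
    · intro t ht
      have : ¬ t ≤ m := by omega
      simp [this]
    · intro t ht
      by_cases htm : t < m
      · have h1 : t ≤ m := by omega
        have h2 : t + 1 ≤ m := by omega
        simpa [h1, h2] using hs t htm
      · have htm' : t = m := by omega
        subst htm'
        have h2 : ¬ (t + 1 ≤ t) := by omega
        simpa [h2, hb t le_rfl] using hbc

lemma crossing {P : ℕ → Prop} : ∀ (b a : ℕ), a ≤ b → P a → ¬ P b →
    ∃ s, a ≤ s ∧ s < b ∧ P s ∧ ¬ P (s+1) := by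
  intro b
  induction b with
  | zero =>
    intro a hab ha hb
    have : a = 0 := by omega
    subst this; exact absurd ha hb
  | succ b ih =>
    intro a hab ha hb
    by_cases hPb : P b
    · have hab' : a ≤ b := by
        by_contra hc
        have : a = b + 1 := by omega
        subst this; exact hb ha
      exact ⟨b, hab', by omega, hPb, hb⟩
    · have hab' : a ≤ b := by
        by_contra hc
        have : a = b + 1 := by omega
        subst this; exact hb ha
      obtain ⟨s, h1, h2, h3, h4⟩ := ih a hab' ha hPb
      exact ⟨s, h1, by omega, h3, h4⟩

end Stmt8Aux
set_option maxHeartbeats 2000000 in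
lemma stmt8_main {n : ℕ} (f : BN n) (x y : Fin n → Bool) (m : ℕ) (π : ℕ → Fin n → PState)
    (h0 : π 0 = embed x) (hend : ∀ t, m ≤ t → π t = embed y)
    (hstep : ∀ t < m, mpStep f (π t) (π (t+1))) :
    ∃ (k1 k2 k3 : ℕ) (w : ℕ → Fin n → PState),
      k1 ≤ n ∧ k2 ≤ n ∧ k3 ≤ n ∧
      w 0 = embed x ∧ w (k1 + k2 + k3) = embed y ∧
      (∀ t < k1 + k2 + k3, mpStep f (w t) (w (t+1))) ∧
      (∀ t < k1, ∀ j, w t j ≠ w (t+1) j →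
        (w t j).isBool ∧ ¬ (w (t+1) j).isBool) ∧
      (∀ t, k1 ≤ t → t < k1 + k2 → ∀ j, w t j ≠ w (t+1) j →
        ¬ (w t j).isBool ∧ ¬ (w (t+1) j).isBool) ∧
      (∀ t, k1 + k2 ≤ t → t < k1 + k2 + k3 → ∀ j, w t j ≠ w (t+1) j →
        ¬ (w t j).isBool ∧ (w (t+1) j).isBool) := by
  classical
  set dyn : PState → Prop := fun p => p = .up ∨ p = .down with hdyn
  set D : Finset (Fin n) := Finset.univ.filter (fun i => ∃ t, dyn (π t i)) with hD
  have hmemD : ∀ i, i ∈ D ↔ ∃ t, dyn (π t i) := by intro i; simp [hD]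
  set t1 : Fin n → ℕ := fun i => if h : ∃ t, dyn (π t i) then Nat.find h else 0 with ht1def
  set t2 : Fin n → ℕ := fun i => Nat.findGreatest (fun t => dyn (π t i)) m with ht2def
  have hπ0 : ∀ j, π 0 j = embed x j := fun j => congrFun h0 j
  have hπm : ∀ j, π m j = embed y j := fun j => congrFun (hend m le_rfl) j
  have hdyn1 : ∀ i ∈ D, dyn (π (t1 i) i) ∧ ∀ s < t1 i, ¬ dyn (π s i) := by
    intro i hi
    have hex : ∃ t, dyn (π t i) := (hmemD i).mp hi
    have ht1 : t1 i = Nat.find hex := by simp only [ht1def]; rw [dif_pos hex]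
    rw [ht1]
    exact ⟨Nat.find_spec hex, fun s hs => Nat.find_min hex hs⟩
  have ht1m : ∀ i ∈ D, 0 < t1 i ∧ t1 i < m := by
    intro i hi
    have h1 := (hdyn1 i hi).1
    constructor
    · rcases Nat.eq_zero_or_pos (t1 i) with h | h
      · rw [h] at h1
        rw [hπ0 i] at h1
        exact absurd h1 (PState.ofBool_not_dyn (x i))
      · exact h
    · by_contra hc
      push_neg at hc
      rw [congrFun (hend (t1 i) hc) i] at h1
      exact absurd h1 (PState.ofBool_not_dyn (y i))
  have hdyn2 : ∀ i ∈ D, dyn (π (t2 i) i) ∧ t2 i < m ∧ ∀ s, t2 i < s → ¬ dyn (π s i) := by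
    intro i hi
    have h1 := (hdyn1 i hi).1
    have hle : t1 i ≤ m := le_of_lt (ht1m i hi).2
    have hspec : dyn (π (t2 i) i) := by
      simp only [ht2def]
      exact Nat.findGreatest_spec (P := fun t => dyn (π t i)) hle h1
    have hlem : t2 i ≤ m := by simp only [ht2def]; exact Nat.findGreatest_le (P := fun t => dyn (π t i)) m
    have hltm : t2 i < m := by
      rcases lt_or_eq_of_le hlem with h | h
      · exact h
      · rw [h] at hspec
        rw [hπm i] at hspec
        exact absurd hspec (PState.ofBool_not_dyn (y i))
    refine ⟨hspec, hltm, fun s hs => ?_⟩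
    by_cases hsm : s ≤ m
    · exact Nat.findGreatest_is_greatest (P := fun t => dyn (π t i)) (n := m)
        (by simpa [ht2def] using hs) hsm
    · push_neg at hsm
      rw [congrFun (hend s (le_of_lt hsm)) i]
      exact PState.ofBool_not_dyn (y i)
  have ht1le2 : ∀ i ∈ D, t1 i ≤ t2 i := by
    intro i hi
    simp only [ht2def]
    exact Nat.le_findGreatest (le_of_lt (ht1m i hi).2) (hdyn1 i hi).1
  have hconst : ∀ (j : Fin n) (t : ℕ), (∀ s, s ≤ t → ¬ dyn (π s j)) → π t j = embed x j := by
    intro j t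
    induction t with
    | zero => intro _; exact hπ0 j
    | succ t ih =>
      intro hnd
      have hstp : π (t+1) j = π t j := by
        by_cases htm : t < m
        · exact (mpStep_fix (hstep t htm) (hnd t (by omega)) (hnd (t+1) le_rfl)).symm
        · push_neg at htm
          rw [congrFun (hend t htm) j, congrFun (hend (t+1) (by omega)) j]
      rw [hstp]
      exact ih (fun s hs => hnd s (by omega))
  have hconst2 : ∀ (j : Fin n) (t : ℕ), t ≤ m → (∀ s, t ≤ s → ¬ dyn (π s j)) →
      π t j = embed y j := by
    have key : ∀ (d : ℕ) (j : Fin n) (t : ℕ), t + d = m → (∀ s, t ≤ s → ¬ dyn (π s j)) →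
        π t j = embed y j := by
      intro d
      induction d with
      | zero =>
        intro j t ht _
        have : t = m := by omega
        rw [this]; exact hπm j
      | succ d ih =>
        intro j t ht hnd
        have hstp : π t j = π (t+1) j :=
          mpStep_fix (hstep t (by omega)) (hnd t le_rfl) (hnd (t+1) (by omega))
        rw [hstp]
        exact ih j (t+1) (by omega) (fun s hs => hnd s (by omega))
    intro j t htm hnd
    exact key (m - t) j t (by omega) hnd
  have hnotD : ∀ j, j ∉ D → ∀ t, π t j = embed x j := by
    intro j hj t
    have hnd : ∀ s, ¬ dyn (π s j) := by
      intro s hs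
      exact hj ((hmemD j).mpr ⟨s, hs⟩)
    exact hconst j t (fun s _ => hnd s)
  have hnotD_xy : ∀ j, j ∉ D → embed x j = embed y j := by
    intro j hj
    rw [← hnotD j hj m, hπm j]
  have hx_before : ∀ i ∈ D, ∀ s < t1 i, π s i = embed x i := by
    intro i hi s hs
    exact hconst i s (fun s' hs' => (hdyn1 i hi).2 s' (by omega))
  have ht1inj : ∀ i ∈ D, ∀ j ∈ D, t1 i = t1 j → i = j := by
    intro i hi j hj hij
    by_contra hne
    have h1 := (ht1m i hi).1
    have h2 := (ht1m i hi).2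
    have hstep' := hstep (t1 i - 1) (by omega)
    rw [show t1 i - 1 + 1 = t1 i from by omega] at hstep'
    have hai : π (t1 i - 1) i ≠ π (t1 i) i := by
      intro hE
      exact (hdyn1 i hi).2 (t1 i - 1) (by omega) (hE ▸ (hdyn1 i hi).1)
    have haj : π (t1 i - 1) j ≠ π (t1 i) j := by
      intro hE
      have := (hdyn1 j hj).1
      rw [← hij] at this
      exact (hdyn1 j hj).2 (t1 i - 1) (by omega) (hE ▸ this)
    exact haj ((mpStep_at hstep' hai).1 j (fun hE => hne hE.symm))
  have hfirst : ∀ i ∈ D,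
      ((π (t1 i) i = .up ∧ embed x i ≠ .one ∧ ∃ z ∈ gamma (π (t1 i - 1)), f z i = true) ∨
       (π (t1 i) i = .down ∧ embed x i ≠ .zero ∧ ∃ z ∈ gamma (π (t1 i - 1)), f z i = false)) := by
    intro i hi
    have h1 := (ht1m i hi).1
    have h2 := (ht1m i hi).2
    have hstep' := hstep (t1 i - 1) (by omega)
    rw [show t1 i - 1 + 1 = t1 i from by omega] at hstep'
    have hxi : π (t1 i - 1) i = embed x i := hx_before i hi _ (by omega)
    have hai : π (t1 i - 1) i ≠ π (t1 i) i := by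
      intro hE
      exact (hdyn1 i hi).2 (t1 i - 1) (by omega) (hE ▸ (hdyn1 i hi).1)
    have hndyn : ¬ dyn (π (t1 i - 1) i) := (hdyn1 i hi).2 (t1 i - 1) (by omega)
    rcases (mpStep_at hstep' hai).2 with ⟨ha, hb, hc⟩ | ⟨ha, hb⟩ | ⟨ha, hb, hc⟩ | ⟨ha, hb⟩
    · exact Or.inl ⟨ha, by rw [← hxi]; exact hb, hc⟩
    · exact absurd (Or.inl hb) hndyn
    · exact Or.inr ⟨ha, by rw [← hxi]; exact hb, hc⟩
    · exact absurd (Or.inr hb) hndyn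
  have hlast : ∀ i ∈ D, (π (t2 i) i = .up ∧ y i = true) ∨ (π (t2 i) i = .down ∧ y i = false) := by
    intro i hi
    obtain ⟨hd2, hltm, hgr⟩ := hdyn2 i hi
    have hstep' := hstep (t2 i) hltm
    have hnd : ¬ dyn (π (t2 i + 1) i) := hgr (t2 i + 1) (by omega)
    have hai : π (t2 i) i ≠ π (t2 i + 1) i := by
      intro hE
      exact hnd (hE ▸ hd2)
    have hyi : π (t2 i + 1) i = embed y i :=
      hconst2 i (t2 i + 1) (by omega) (fun s hs => hgr s (by omega))
    rcases (mpStep_at hstep' hai).2 with ⟨ha, _, _⟩ | ⟨ha, hb⟩ | ⟨ha, _, _⟩ | ⟨ha, hb⟩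
    · exact absurd (Or.inl ha) hnd
    · refine Or.inl ⟨hb, ?_⟩
      have hE : PState.ofBool (y i) = PState.one := by
        rw [show PState.ofBool (y i) = embed y i from rfl, ← hyi]; exact ha
      cases hyv : y i
      · rw [hyv] at hE; simp [PState.ofBool] at hE
      · rfl
    · exact absurd (Or.inr ha) hnd
    · refine Or.inr ⟨hb, ?_⟩
      have hE : PState.ofBool (y i) = PState.zero := by
        rw [show PState.ofBool (y i) = embed y i from rfl, ← hyi]; exact ha
      cases hyv : y i
      · rfl
      · rw [hyv] at hE; simp [PState.ofBool] at hE
  have hmid : ∀ i ∈ D, π (t1 i) i ≠ π (t2 i) i →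
      ∃ s < m, (∀ j, j ∉ D → π s j = embed x j) ∧
        ((π (t2 i) i = .up ∧ ∃ z ∈ gamma (π s), f z i = true) ∨
         (π (t2 i) i = .down ∧ ∃ z ∈ gamma (π s), f z i = false)) := by
    intro i hi hne
    obtain ⟨s, hs1, hs2, hs3, hs4⟩ :=
      crossing (P := fun s => π s i ≠ π (t2 i) i) (t2 i) (t1 i) (ht1le2 i hi) hne (by simp)
    have hs4' : π (s+1) i = π (t2 i) i := not_not.mp hs4
    have hsltm : s < m := by
      have := (hdyn2 i hi).2.1
      omega
    have hstep' := hstep s hsltm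
    have hai : π s i ≠ π (s+1) i := by rw [hs4']; exact hs3
    have hdynl : dyn (π (t2 i) i) := (hdyn2 i hi).1
    refine ⟨s, hsltm, fun j hj => hnotD j hj s, ?_⟩
    rcases (mpStep_at hstep' hai).2 with ⟨ha, _, hc⟩ | ⟨ha, _⟩ | ⟨ha, _, hc⟩ | ⟨ha, _⟩
    · rw [hs4'] at ha
      exact Or.inl ⟨ha, hc⟩
    · rw [hs4'] at ha
      exact absurd ha (PState.dyn_ne_one hdynl)
    · rw [hs4'] at ha
      exact Or.inr ⟨ha, hc⟩
    · rw [hs4'] at ha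
      exact absurd ha (PState.dyn_ne_zero hdynl)
  -- enumerations
  set T : Finset ℕ := D.image t1 with hT
  have hTcard : T.card = D.card :=
    Finset.card_image_of_injOn (fun i hi j hj hij => ht1inj i hi j hj hij)
  set k1 := D.card with hk1
  set e1 : Fin k1 ≃o T := T.orderIsoOfFin hTcard with he1
  set D2 : Finset (Fin n) := D.filter (fun i => π (t1 i) i ≠ π (t2 i) i) with hD2
  set k2 := D2.card with hk2
  set e2 : Fin k2 ≃o D2 := D2.orderIsoOfFin rfl with he2
  set e3 : Fin k1 ≃o D := D.orderIsoOfFin rfl with he3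
  set p1 : Fin n → ℕ :=
    fun i => if h : i ∈ D then (e1.symm ⟨t1 i, Finset.mem_image_of_mem t1 h⟩ : ℕ) else 0 with hp1
  set p2 : Fin n → ℕ := fun i => if h : i ∈ D2 then (e2.symm ⟨i, h⟩ : ℕ) else 0 with hp2
  set p3 : Fin n → ℕ := fun i => if h : i ∈ D then (e3.symm ⟨i, h⟩ : ℕ) else 0 with hp3
  have hp1lt : ∀ i ∈ D, p1 i < k1 := by
    intro i hi
    simp only [hp1]
    rw [dif_pos hi]
    exact Fin.is_lt _
  have hp2lt : ∀ i ∈ D2, p2 i < k2 := by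
    intro i hi
    simp only [hp2]
    rw [dif_pos hi]
    exact Fin.is_lt _
  have hp3lt : ∀ i ∈ D, p3 i < k1 := by
    intro i hi
    simp only [hp3]
    rw [dif_pos hi]
    exact Fin.is_lt _
  have hp1inj : ∀ i ∈ D, ∀ j ∈ D, p1 i = p1 j → i = j := by
    intro i hi j hj hij
    simp only [hp1] at hij
    rw [dif_pos hi, dif_pos hj] at hij
    have := e1.symm.injective (Fin.val_injective hij)
    exact ht1inj i hi j hj (congrArg Subtype.val this)
  have hp2inj : ∀ i ∈ D2, ∀ j ∈ D2, p2 i = p2 j → i = j := by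
    intro i hi j hj hij
    simp only [hp2] at hij
    rw [dif_pos hi, dif_pos hj] at hij
    have := e2.symm.injective (Fin.val_injective hij)
    exact congrArg Subtype.val this
  have hp3inj : ∀ i ∈ D, ∀ j ∈ D, p3 i = p3 j → i = j := by
    intro i hi j hj hij
    simp only [hp3] at hij
    rw [dif_pos hi, dif_pos hj] at hij
    have := e3.symm.injective (Fin.val_injective hij)
    exact congrArg Subtype.val this
  have hord : ∀ i ∈ D, ∀ j ∈ D, (p1 i < p1 j ↔ t1 i < t1 j) := by
    intro i hi j hj
    simp only [hp1]
    rw [dif_pos hi, dif_pos hj]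
    rw [← Fin.lt_def, OrderIso.lt_iff_lt, Subtype.mk_lt_mk]
  have hsurj1 : ∀ s, s < k1 → ∃ i, i ∈ D ∧ p1 i = s := by
    intro s hs
    obtain ⟨i, hi, hti⟩ := Finset.mem_image.mp (e1 ⟨s, hs⟩).2
    refine ⟨i, hi, ?_⟩
    simp only [hp1]
    rw [dif_pos hi]
    have : (⟨t1 i, Finset.mem_image_of_mem t1 hi⟩ : T) = e1 ⟨s, hs⟩ := Subtype.ext hti
    rw [this, OrderIso.symm_apply_apply]
  have hsurj2 : ∀ s, s < k2 → ∃ i, i ∈ D2 ∧ p2 i = s := by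
    intro s hs
    refine ⟨(e2 ⟨s, hs⟩ : Fin n), (e2 ⟨s, hs⟩).2, ?_⟩
    simp only [hp2]
    rw [dif_pos (e2 ⟨s, hs⟩).2]
    have : (⟨(e2 ⟨s, hs⟩ : Fin n), (e2 ⟨s, hs⟩).2⟩ : D2) = e2 ⟨s, hs⟩ := Subtype.ext rfl
    rw [this, OrderIso.symm_apply_apply]
  have hsurj3 : ∀ s, s < k1 → ∃ i, i ∈ D ∧ p3 i = s := by
    intro s hs
    refine ⟨(e3 ⟨s, hs⟩ : Fin n), (e3 ⟨s, hs⟩).2, ?_⟩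
    simp only [hp3]
    rw [dif_pos (e3 ⟨s, hs⟩).2]
    have : (⟨(e3 ⟨s, hs⟩ : Fin n), (e3 ⟨s, hs⟩).2⟩ : D) = e3 ⟨s, hs⟩ := Subtype.ext rfl
    rw [this, OrderIso.symm_apply_apply]
  have hD2sub : ∀ i ∈ D2, i ∈ D ∧ π (t1 i) i ≠ π (t2 i) i := by
    intro i hi; simpa [hD2] using hi
  have hFLeq : ∀ i ∈ D, i ∉ D2 → π (t1 i) i = π (t2 i) i := by
    intro i hi hi2
    by_contra hne
    exact hi2 (by simp [hD2, hi, hne])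
  -- the canonical walk
  set w : ℕ → Fin n → PState := fun t i =>
    if i ∈ D then
      if t ≤ k1 then (if p1 i < t then π (t1 i) i else embed x i)
      else if t ≤ k1 + k2 then
        (if i ∈ D2 ∧ p2 i < t - k1 then π (t2 i) i else π (t1 i) i)
      else (if p3 i < t - (k1 + k2) then embed y i else π (t2 i) i)
    else embed x i with hwdef
  have hw1 : ∀ t, t ≤ k1 → ∀ i, w t i =
      if i ∈ D ∧ p1 i < t then π (t1 i) i else embed x i := by
    intro t ht i
    by_cases hi : i ∈ D
    · simp [hwdef, hi, ht]
    · simp [hwdef, hi]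
  have hw2 : ∀ t, k1 ≤ t → t ≤ k1 + k2 → ∀ i, w t i =
      if i ∈ D then (if i ∈ D2 ∧ p2 i < t - k1 then π (t2 i) i else π (t1 i) i)
      else embed x i := by
    intro t h1 h2 i
    by_cases hi : i ∈ D
    · by_cases ht : t = k1
      · subst ht
        simp [hwdef, hi, hp1lt i hi]
      · have h3 : ¬ (t ≤ k1) := by omega
        simp [hwdef, hi, h3, h2]
    · simp [hwdef, hi]
  have hw3 : ∀ t, k1 + k2 ≤ t → ∀ i, w t i =
      if i ∈ D then (if p3 i < t - (k1 + k2) then embed y i else π (t2 i) i)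
      else embed x i := by
    intro t ht i
    by_cases hi : i ∈ D
    · by_cases hteq : t = k1 + k2
      · subst hteq
        rw [hw2 (k1+k2) (by omega) le_rfl i, if_pos hi, if_pos hi,
          if_neg (by omega : ¬ p3 i < k1 + k2 - (k1 + k2))]
        by_cases hi2 : i ∈ D2
        · rw [if_pos ⟨hi2, by
            have := hp2lt i hi2
            omega⟩]
        · rw [if_neg (by tauto), hFLeq i hi hi2]
      · have h2 : ¬ (t ≤ k1) := by
          have := Nat.zero_le k2
          omega
        have h3 : ¬ (t ≤ k1 + k2) := by omega
        simp [hwdef, hi, h2, h3]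
    · simp [hwdef, hi]
  have hcardn : k1 ≤ n := by
    have := Finset.card_le_univ D
    simpa [hk1] using this
  have hcardn2 : k2 ≤ n := by
    have := Finset.card_le_univ D2
    simpa [hk2] using this
  refine ⟨k1, k2, k1, w, hcardn, hcardn2, hcardn, ?_, ?_, ?_, ?_, ?_, ?_⟩
  · -- w 0 = embed x
    funext i
    rw [hw1 0 (Nat.zero_le _) i]
    simp
  · -- w (k1+k2+k1) = embed y
    funext i
    rw [hw3 (k1+k2+k1) (by omega) i]
    by_cases hi : i ∈ D
    · have : p3 i < k1 + k2 + k1 - (k1 + k2) := by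
        have := hp3lt i hi
        omega
      rw [if_pos hi, if_pos this]
    · simp [hi, hnotD_xy i hi]
  · -- steps
    intro t ht
    rcases Nat.lt_or_ge t k1 with h1 | h1
    · -- phase 1
      obtain ⟨i, hiD, hp1i⟩ := hsurj1 t h1
      have hdyni := (hdyn1 i hiD).1
      have hwt : w t i = embed x i := by
        rw [hw1 t (le_of_lt h1) i, if_neg]
        rintro ⟨-, hlt⟩
        omega
      have hwt1 : w (t+1) i = π (t1 i) i := by
        rw [hw1 (t+1) h1 i, if_pos ⟨hiD, by omega⟩]
      have hne : w t i ≠ w (t+1) i := by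
        rw [hwt, hwt1]
        intro hE
        exact PState.dyn_ne_ofBool hdyni (x i) hE.symm
      refine ⟨i, hne, ?_, ?_⟩
      · intro j hj
        rw [hw1 t (le_of_lt h1) j, hw1 (t+1) h1 j]
        by_cases hjD : j ∈ D
        · have hne' : p1 j ≠ t := fun hEq => hj (hp1inj j hjD i hiD (by rw [hEq, hp1i]))
          by_cases hlt : p1 j < t
          · rw [if_pos ⟨hjD, hlt⟩, if_pos ⟨hjD, by omega⟩]
          · rw [if_neg (by tauto), if_neg (by rintro ⟨-, h⟩; omega)]
        · rw [if_neg (by tauto), if_neg (by tauto)]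
      · have hsub : gamma (π (t1 i - 1)) ⊆ gamma (w t) := by
          apply gammaMono
          intro j v hv
          rw [hw1 t (le_of_lt h1) j] at hv
          by_cases hjD : j ∈ D
          · by_cases hlt : p1 j < t
            · rw [if_pos ⟨hjD, hlt⟩] at hv
              exact absurd hv (PState.dyn_ne_ofBool (hdyn1 j hjD).1 v)
            · rw [if_neg (by tauto)] at hv
              rw [← hv]
              by_cases hji : j = i
              · subst hji
                exact hx_before j hjD _ (by have := (ht1m j hjD).1; omega)
              · have hgt : t1 i < t1 j := by
                  rw [← hord i hiD j hjD]
                  have : p1 j ≠ p1 i := fun hE => hji (hp1inj j hjD i hiD hE)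
                  omega
                exact hx_before j hjD _ (by omega)
          · rw [if_neg (by tauto)] at hv
            rw [← hv]
            exact hnotD j hjD _
        rcases hfirst i hiD with ⟨hup, hxne, z, hz, hfz⟩ | ⟨hdn, hxne, z, hz, hfz⟩
        · exact Or.inl ⟨by rw [hwt1]; exact hup, by rw [hwt]; exact hxne, z, hsub hz, hfz⟩
        · exact Or.inr (Or.inr (Or.inl ⟨by rw [hwt1]; exact hdn,
            by rw [hwt]; exact hxne, z, hsub hz, hfz⟩))
    rcases Nat.lt_or_ge t (k1 + k2) with h2 | h2
    · -- phase 2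
      obtain ⟨i, hiD2, hp2i⟩ := hsurj2 (t - k1) (by omega)
      obtain ⟨hiD, hFL⟩ := hD2sub i hiD2
      have hdynF := (hdyn1 i hiD).1
      have hdynL := (hdyn2 i hiD).1
      have hwt : w t i = π (t1 i) i := by
        rw [hw2 t h1 (by omega) i, if_pos hiD, if_neg]
        rintro ⟨-, hlt⟩
        omega
      have hwt1 : w (t+1) i = π (t2 i) i := by
        rw [hw2 (t+1) (by omega) (by omega) i, if_pos hiD, if_pos ⟨hiD2, by omega⟩]
      have hne : w t i ≠ w (t+1) i := by rw [hwt, hwt1]; exact hFL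
      refine ⟨i, hne, ?_, ?_⟩
      · intro j hj
        rw [hw2 t h1 (by omega) j, hw2 (t+1) (by omega) (by omega) j]
        by_cases hjD : j ∈ D
        · rw [if_pos hjD, if_pos hjD]
          by_cases hjD2 : j ∈ D2
          · have hne' : p2 j ≠ t - k1 :=
              fun hEq => hj (hp2inj j hjD2 i hiD2 (by rw [hEq, hp2i]))
            by_cases hlt : p2 j < t - k1
            · rw [if_pos ⟨hjD2, hlt⟩, if_pos ⟨hjD2, by omega⟩]
            · rw [if_neg (by tauto), if_neg (by rintro ⟨-, h⟩; omega)]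
          · rw [if_neg (by tauto), if_neg (by tauto)]
        · rw [if_neg hjD, if_neg hjD]
      · obtain ⟨s0, hs0m, hs0x, hcase⟩ := hmid i hiD hFL
        have hsub : gamma (π s0) ⊆ gamma (w t) := by
          apply gammaMono
          intro j v hv
          rw [hw2 t h1 (by omega) j] at hv
          by_cases hjD : j ∈ D
          · rw [if_pos hjD] at hv
            by_cases hc : j ∈ D2 ∧ p2 j < t - k1
            · rw [if_pos hc] at hv
              exact absurd hv (PState.dyn_ne_ofBool (hdyn2 j hjD).1 v)
            · rw [if_neg hc] at hv
              exact absurd hv (PState.dyn_ne_ofBool (hdyn1 j hjD).1 v)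
          · rw [if_neg hjD] at hv
            rw [← hv]
            exact hs0x j hjD
        rcases hcase with ⟨hup, z, hz, hfz⟩ | ⟨hdn, z, hz, hfz⟩
        · exact Or.inl ⟨by rw [hwt1]; exact hup,
            by rw [hwt]; exact PState.dyn_ne_one hdynF, z, hsub hz, hfz⟩
        · exact Or.inr (Or.inr (Or.inl ⟨by rw [hwt1]; exact hdn,
            by rw [hwt]; exact PState.dyn_ne_zero hdynF, z, hsub hz, hfz⟩))
    · -- phase 3
      obtain ⟨i, hiD, hp3i⟩ := hsurj3 (t - (k1 + k2)) (by omega)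
      have hdynL := (hdyn2 i hiD).1
      have hwt : w t i = π (t2 i) i := by
        rw [hw3 t h2 i, if_pos hiD, if_neg]
        intro hlt
        omega
      have hwt1 : w (t+1) i = embed y i := by
        rw [hw3 (t+1) (by omega) i, if_pos hiD, if_pos (by omega)]
      have hne : w t i ≠ w (t+1) i := by
        rw [hwt, hwt1]
        exact PState.dyn_ne_ofBool hdynL (y i)
      refine ⟨i, hne, ?_, ?_⟩
      · intro j hj
        rw [hw3 t h2 j, hw3 (t+1) (by omega) j]
        by_cases hjD : j ∈ D
        · rw [if_pos hjD, if_pos hjD]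
          have hne' : p3 j ≠ t - (k1+k2) :=
            fun hEq => hj (hp3inj j hjD i hiD (by rw [hEq, hp3i]))
          by_cases hlt : p3 j < t - (k1+k2)
          · rw [if_pos hlt, if_pos (by omega)]
          · rw [if_neg hlt, if_neg (by omega)]
        · rw [if_neg hjD, if_neg hjD]
      · rcases hlast i hiD with ⟨hup, hyt⟩ | ⟨hdn, hyf⟩
        · refine Or.inr (Or.inl ⟨?_, by rw [hwt]; exact hup⟩)
          rw [hwt1, show embed y i = PState.ofBool (y i) from rfl, hyt]; rfl
        · refine Or.inr (Or.inr (Or.inr ⟨?_, by rw [hwt]; exact hdn⟩))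
          rw [hwt1, show embed y i = PState.ofBool (y i) from rfl, hyf]; rfl
  · -- phase 1 shape
    intro t ht j hne
    rw [hw1 t (le_of_lt ht) j, hw1 (t+1) ht j] at hne ⊢
    by_cases hjD : j ∈ D
    · by_cases hlt : p1 j < t
      · rw [if_pos ⟨hjD, hlt⟩, if_pos ⟨hjD, by omega⟩] at hne
        exact absurd rfl hne
      · by_cases hlt1 : p1 j < t + 1
        · rw [if_neg (by tauto), if_pos ⟨hjD, hlt1⟩]
          refine ⟨PState.ofBool_isBool (x j), ?_⟩
          rw [← PState.dyn_iff]
          exact (hdyn1 j hjD).1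
        · rw [if_neg (by tauto), if_neg (by tauto)] at hne
          exact absurd rfl hne
    · rw [if_neg (by tauto), if_neg (by tauto)] at hne
      exact absurd rfl hne
  · -- phase 2 shape
    intro t h1 h2 j hne
    rw [hw2 t h1 (by omega) j, hw2 (t+1) (by omega) (by omega) j] at hne ⊢
    by_cases hjD : j ∈ D
    · rw [if_pos hjD, if_pos hjD]
      constructor
      · rw [← PState.dyn_iff]
        by_cases hc : j ∈ D2 ∧ p2 j < t - k1
        · rw [if_pos hc]; exact (hdyn2 j hjD).1
        · rw [if_neg hc]; exact (hdyn1 j hjD).1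
      · rw [← PState.dyn_iff]
        by_cases hc : j ∈ D2 ∧ p2 j < t + 1 - k1
        · rw [if_pos hc]; exact (hdyn2 j hjD).1
        · rw [if_neg hc]; exact (hdyn1 j hjD).1
    · rw [if_neg hjD, if_neg hjD] at hne
      exact absurd rfl hne
  · -- phase 3 shape
    intro t h1 h2 j hne
    rw [hw3 t h1 j, hw3 (t+1) (by omega) j] at hne ⊢
    by_cases hjD : j ∈ D
    · rw [if_pos hjD, if_pos hjD] at hne ⊢
      by_cases hlt : p3 j < t - (k1+k2)
      · rw [if_pos hlt, if_pos (show p3 j < t + 1 - (k1+k2) by omega)] at hne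
        exact absurd rfl hne
      · by_cases hlt1 : p3 j < t + 1 - (k1+k2)
        · rw [if_neg hlt, if_pos hlt1]
          refine ⟨?_, PState.ofBool_isBool (y j)⟩
          rw [← PState.dyn_iff]
          exact (hdyn2 j hjD).1
        · rw [if_neg hlt, if_neg hlt1] at hne
          exact absurd rfl hne
    · rw [if_neg hjD, if_neg hjD] at hne
      exact absurd rfl hne

theorem stmt8 {n : ℕ} (f : BN n) (x y : Fin n → Bool)
    (h : y ∈ mpReach f x) :
    ∃ (k1 k2 k3 : ℕ) (w : ℕ → Fin n → PState),
      k1 ≤ n ∧ k2 ≤ n ∧ k3 ≤ n ∧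
      w 0 = embed x ∧ w (k1 + k2 + k3) = embed y ∧
      (∀ t < k1 + k2 + k3, mpStep f (w t) (w (t+1))) ∧
      (∀ t < k1, ∀ j, w t j ≠ w (t+1) j →
        (w t j).isBool ∧ ¬ (w (t+1) j).isBool) ∧
      (∀ t, k1 ≤ t → t < k1 + k2 → ∀ j, w t j ≠ w (t+1) j →
        ¬ (w t j).isBool ∧ ¬ (w (t+1) j).isBool) ∧
      (∀ t, k1 + k2 ≤ t → t < k1 + k2 + k3 → ∀ j, w t j ≠ w (t+1) j →
        ¬ (w t j).isBool ∧ (w (t+1) j).isBool) := by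
  obtain ⟨m, π, h0, hend, hstep⟩ := pathOf h
  exact stmt8_main f x y m π h0 hend hstep
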